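/- Let G be a group and R a retract of G, i.e. a subgroup of G such that there exists a homomorphism ρ : G → R restricting to the identity on R. Suppose that G is weakly hyperbolic relative to a collection of subgroups {A₁, …, Aₘ} with Aᵢ ≤ R for all i = 1, …, m. Then R is weakly hyperbolic relative to {A₁, …, Aₘ}. -/

import Mathlib

/-- The Cayley graph of a group `G` with respect to a set `S` of generators: two distinct
elements `a b : G` are adjacent iff they differ by right multiplication by an element of
`S` or the inverse of an element of `S`. -/
def cayleyGraph (G : Type*) [Group G] (S : Set G) : SimpleGraph G where
  Adj a b := a ≠ b ∧ (a⁻¹ * b ∈ S ∨ b⁻¹ * a ∈ S)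
  symm := by
    constructor
    rintro a b ⟨hne, h⟩
    exact ⟨hne.symm, h.symm⟩
  loopless := by constructor; rintro a ⟨hne, -⟩; exact hne rfl

/-- A walk in a graph is a (discrete) geodesic if its length equals the combinatorial
distance between its endpoints. -/
def SimpleGraph.IsGeodesic {V : Type*} (Γ : SimpleGraph V) {u v : V} (p : Γ.Walk u v) : Prop :=
  p.length = Γ.dist u v

/-- A graph is hyperbolic (as a geodesic metric space, with the combinatorial metric in
which every edge has length `1`) iff there is `δ ≥ 0` such that each side of every
geodesic triangle is contained in the closed `δ`-neighbourhood of the union of the other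
two sides. -/
def SimpleGraph.IsHyperbolic {V : Type*} (Γ : SimpleGraph V) : Prop :=
  ∃ δ : ℕ, ∀ (u v w : V) (p : Γ.Walk u v) (q : Γ.Walk v w) (r : Γ.Walk u w),
    Γ.IsGeodesic p → Γ.IsGeodesic q → Γ.IsGeodesic r →
    ∀ x ∈ r.support, ∃ y, (y ∈ p.support ∨ y ∈ q.support) ∧ Γ.dist x y ≤ δ

/-- `X ⊆ G` is a relative generating set of `G` with respect to the collection of
subgroups `H i`, i.e. `G` is generated by `X` together with all the `H i`. -/
def IsRelGenSet {G : Type*} [Group G] {ι : Type*} (H : ι → Subgroup G) (X : Set G) : Prop :=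
  Subgroup.closure (X ∪ ⋃ i, (H i : Set G)) = ⊤

/-- The relative Cayley graph of `G` with respect to the collection of subgroups `H i`
and the set `X`: the Cayley graph of `G` with respect to the generating set
`X ∪ ⋃ i, H i`. -/
def relCayleyGraph (G : Type*) [Group G] {ι : Type*} (H : ι → Subgroup G) (X : Set G) :
    SimpleGraph G :=
  cayleyGraph G (X ∪ ⋃ i, (H i : Set G))

/-- `G` is weakly hyperbolic relative to the collection of subgroups `H i` if there is a
finite relative generating set `X` of `G` with respect to the `H i` such that the
corresponding relative Cayley graph is hyperbolic. -/
def IsWeaklyRelativelyHyperbolic (G : Type*) [Group G] {ι : Type*} (H : ι → Subgroup G) :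
    Prop :=
  ∃ X : Set G, X.Finite ∧ IsRelGenSet H X ∧ (relCayleyGraph G H X).IsHyperbolic

namespace SimpleGraph
namespace Walk

variable {V : Type*} {G : SimpleGraph V}

/-- Take the first `n` darts of a walk. -/
def wtake {u v : V} : (p : G.Walk u v) → (n : ℕ) → G.Walk u (p.getVert n)
  | .nil, _ => .nil
  | .cons _ _, 0 => .nil
  | .cons h q, n + 1 => .cons h (q.wtake n)

/-- Drop the first `n` darts of a walk. -/
def wdrop {u v : V} : (p : G.Walk u v) → (n : ℕ) → G.Walk (p.getVert n) v
  | .nil, _ => .nil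
  | .cons h q, 0 => .cons h q
  | .cons _ q, n + 1 => q.wdrop n

lemma length_wtake {u v : V} : (p : G.Walk u v) → (n : ℕ) →
    (p.wtake n).length = min n p.length
  | .nil, n => by simp [wtake]
  | .cons _ _, 0 => by simp [wtake]; rfl
  | .cons h q, n + 1 => by
      simp [wtake, length_wtake q n, Nat.succ_min_succ]

lemma length_wdrop {u v : V} : (p : G.Walk u v) → (n : ℕ) →
    (p.wdrop n).length = p.length - n
  | .nil, n => by simp [wdrop, getVert_nil]
  | .cons _ _, 0 => by simp [wdrop]; rfl
  | .cons h q, n + 1 => by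
      simp [wdrop, length_wdrop q n]

lemma getVert_wtake {u v : V} : (p : G.Walk u v) → (n i : ℕ) →
    (p.wtake n).getVert i = p.getVert (min i n)
  | .nil, n, i => rfl
  | .cons _ _, 0, i => by simp [wtake, getVert]
  | .cons h q, n + 1, 0 => by simp [wtake]
  | .cons h q, n + 1, i + 1 => by
      simp [wtake, getVert_wtake q n i, Nat.succ_min_succ]

lemma getVert_wdrop {u v : V} : (p : G.Walk u v) → (n i : ℕ) →
    (p.wdrop n).getVert i = p.getVert (n + i)
  | .nil, n, i => rfl
  | .cons _ _, 0, i => by simp [wdrop, Nat.zero_add]; rfl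
  | .cons h q, n + 1, i => by
      have : n + 1 + i = (n + i) + 1 := by omega
      simp [wdrop, getVert_wdrop q n i, this]

lemma support_wtake_subset {u v : V} : (p : G.Walk u v) → (n : ℕ) →
    ∀ x ∈ (p.wtake n).support, x ∈ p.support
  | .nil, n => by simp [wtake]
  | .cons _ _, 0 => by simp [wtake]; intro x hx; left; exact List.mem_singleton.1 hx
  | .cons h q, n + 1 => by
      intro x hx
      simp only [wtake, support_cons, List.mem_cons] at hx ⊢
      rcases List.mem_cons.1 hx with h1 | h2
      · exact Or.inl h1
      · exact Or.inr (support_wtake_subset q n x h2)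

lemma support_wdrop_subset {u v : V} : (p : G.Walk u v) → (n : ℕ) →
    ∀ x ∈ (p.wdrop n).support, x ∈ p.support
  | .nil, n => by simp [wdrop, getVert_nil]
  | .cons _ _, 0 => by simp [wdrop]; intro x hx; exact List.mem_cons.1 hx
  | .cons h q, n + 1 => by
      intro x hx
      simp only [wdrop, support_cons, List.mem_cons]
      exact Or.inr (support_wdrop_subset q n x hx)

end Walk

variable {V : Type*} {Γ : SimpleGraph V}

lemma dist_triangle_of_reachable {a b c : V} (h1 : Γ.Reachable a b) (h2 : Γ.Reachable b c) :
    Γ.dist a c ≤ Γ.dist a b + Γ.dist b c := by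
  obtain ⟨p, hp⟩ := h1.exists_walk_length_eq_dist
  obtain ⟨q, hq⟩ := h2.exists_walk_length_eq_dist
  calc Γ.dist a c ≤ (p.append q).length := Γ.dist_le _
  _ = Γ.dist a b + Γ.dist b c := by rw [Walk.length_append, hp, hq]

/-- The distance between the `a`-th and `b`-th vertices of a geodesic is `b - a`. -/
lemma IsGeodesic.dist_getVert {u v : V} {p : Γ.Walk u v} (hp : Γ.IsGeodesic p)
    {a b : ℕ} (hab : a ≤ b) (hb : b ≤ p.length) :
    Γ.dist (p.getVert a) (p.getVert b) = b - a := by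
  have ha : a ≤ p.length := le_trans hab hb
  -- the subwalk from position a to position b
  have hsub : (p.wdrop a).getVert (b - a) = p.getVert b := by
    rw [Walk.getVert_wdrop]
    congr 1; omega
  set q : Γ.Walk (p.getVert a) (p.getVert b) :=
    ((p.wdrop a).wtake (b - a)).copy rfl hsub with hq
  have hqlen : q.length = b - a := by
    rw [hq, Walk.length_copy, Walk.length_wtake, Walk.length_wdrop]
    omega
  have hle : Γ.dist (p.getVert a) (p.getVert b) ≤ b - a := hqlen ▸ Γ.dist_le q
  have h1 : Γ.dist u (p.getVert a) ≤ a := by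
    have := Γ.dist_le (p.wtake a)
    rwa [Walk.length_wtake, min_eq_left ha] at this
  have h2 : Γ.dist (p.getVert b) v ≤ p.length - b := by
    have := Γ.dist_le (p.wdrop b)
    rwa [Walk.length_wdrop] at this
  have t1 : Γ.dist u v ≤ Γ.dist u (p.getVert a) + Γ.dist (p.getVert a) v :=
    dist_triangle_of_reachable ⟨p.wtake a⟩ ⟨p.wdrop a⟩
  have t2 : Γ.dist (p.getVert a) v ≤ Γ.dist (p.getVert a) (p.getVert b)
      + Γ.dist (p.getVert b) v := dist_triangle_of_reachable ⟨q⟩ ⟨p.wdrop b⟩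
  have hlen : p.length = Γ.dist u v := hp
  omega

/-- A sub-segment of a geodesic is a geodesic; it contains the vertices of the original
geodesic with positions between `a` and `b`. -/
lemma IsGeodesic.exists_subgeodesic {u v : V} {p : Γ.Walk u v} (hp : Γ.IsGeodesic p)
    {a b : ℕ} (hab : a ≤ b) (hb : b ≤ p.length) :
    ∃ q : Γ.Walk (p.getVert a) (p.getVert b), Γ.IsGeodesic q ∧
      (∀ x ∈ q.support, x ∈ p.support) ∧
      (∀ i, a ≤ i → i ≤ b → p.getVert i ∈ q.support) := by
  have hsub : (p.wdrop a).getVert (b - a) = p.getVert b := by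
    rw [Walk.getVert_wdrop]
    congr 1; omega
  refine ⟨((p.wdrop a).wtake (b - a)).copy rfl hsub, ?_, ?_, ?_⟩
  · show _ = _
    rw [Walk.length_copy, Walk.length_wtake, Walk.length_wdrop, hp.dist_getVert hab hb]
    omega
  · intro x hx
    rw [Walk.support_copy] at hx
    exact Walk.support_wdrop_subset p a x (Walk.support_wtake_subset _ _ x hx)
  · intro i hi1 hi2
    rw [Walk.support_copy]
    have : p.getVert i = ((p.wdrop a).wtake (b - a)).getVert (i - a) := by
      rw [Walk.getVert_wtake, Walk.getVert_wdrop, min_eq_left (by omega)]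
      congr 1; omega
    rw [this]
    exact Walk.getVert_mem_support _ _


section Morse

variable {V : Type*} {Γ : SimpleGraph V}

lemma dist_le_length_of_mem_support {u v q : V} (W : Γ.Walk u v) (h : q ∈ W.support) :
    Γ.dist u q ≤ W.length ∧ Γ.dist q v ≤ W.length := by
  obtain ⟨i, rfl, hi⟩ := Walk.mem_support_iff_exists_getVert.1 h
  constructor
  · have := Γ.dist_le (W.wtake i)
    rw [Walk.length_wtake, min_eq_left hi] at this
    omega
  · have := Γ.dist_le (W.wdrop i)
    rw [Walk.length_wdrop] at this
    omega

lemma adj_dist_le_one {u v : V} (h : Γ.Adj u v) : Γ.dist u v ≤ 1 :=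
  Γ.dist_le (Walk.cons h Walk.nil)

lemma chain_dist_le (hpre : Γ.Preconnected) {c n : ℕ} {x : ℕ → V}
    (hx : ∀ j < n, Γ.dist (x j) (x (j+1)) ≤ c) :
    ∀ d j, j + d ≤ n → Γ.dist (x j) (x (j + d)) ≤ c * d := by
  intro d
  induction d with
  | zero => intro j _; simp [dist_self]
  | succ d ih =>
    intro j h
    have h1 := ih j (by omega)
    have h2 := hx (j + d) (by omega)
    have h3 := dist_triangle_of_reachable (hpre (x j) (x (j + d)))
      (hpre (x (j + d)) (x (j + d + 1)))
    have : j + (d + 1) = j + d + 1 := by omega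
    rw [this]
    have : c * (d + 1) = c * d + c := by ring
    omega

/-- A walk visiting the points of a chain in order, staying `c`-close to the chain. -/
lemma exists_chain_walk (hpre : Γ.Preconnected) {c : ℕ} {x : ℕ → V} :
    ∀ (k a : ℕ), (∀ t, t < k → Γ.dist (x (a + t)) (x (a + t + 1)) ≤ c) →
    ∃ M : Γ.Walk (x a) (x (a + k)), M.length ≤ c * k ∧
      ∀ q ∈ M.support, ∃ s, a ≤ s ∧ s ≤ a + k ∧ Γ.dist q (x s) ≤ c := by
  intro k
  induction k with
  | zero =>
    intro a _
    refine ⟨Walk.nil, by simp, ?_⟩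
    intro q hq
    rw [Walk.mem_support_nil_iff] at hq
    subst hq
    exact ⟨a, le_refl a, by omega, by simp [dist_self]⟩
  | succ k ih =>
    intro a hgap
    obtain ⟨M, hMl, hMs⟩ := ih a (fun t ht => hgap t (by omega))
    obtain ⟨E, hE⟩ := (hpre (x (a + k)) (x (a + k + 1))).exists_walk_length_eq_dist
    refine ⟨(M.append E).copy rfl (by rw [show a + (k+1) = a + k + 1 by omega]), ?_, ?_⟩
    · rw [Walk.length_copy, Walk.length_append, hE]
      have := hgap k (by omega)
      have : c * (k + 1) = c * k + c := by ring
      omega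
    · intro q hq
      rw [Walk.support_copy, Walk.mem_support_append_iff] at hq
      rcases hq with hq | hq
      · obtain ⟨s, h1, h2, h3⟩ := hMs q hq
        exact ⟨s, h1, by omega, h3⟩
      · refine ⟨a + k + 1, by omega, by omega, ?_⟩
        have h1 := (dist_le_length_of_mem_support E hq).2
        have := hgap k (by omega)
        omega

lemma lin_le_two_pow {a b k : ℕ} (h1 : 2*a ≤ k) (h2 : b ≤ k) : a*k + b ≤ 2^k := by
  rcases Nat.eq_zero_or_pos a with rfl | ha
  · simpa using le_trans h2 (Nat.lt_two_pow_self (n := k)).le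
  · obtain ⟨t, rfl⟩ : ∃ t, k = a + 1 + t := ⟨k - a - 1, by omega⟩
    have e1 : a + 1 ≤ 2^a := Nat.lt_two_pow_self (n := a)
    have e2 : t + 1 ≤ 2^t := Nat.lt_two_pow_self (n := t)
    have e3 : (2:ℕ)^(a+1+t) = 2^a * 2 * 2^t := by rw [pow_add, pow_succ]
    rw [e3]
    nlinarith [e1, e2, h1, h2]

variable (δ c : ℕ)

/-- Thinness of geodesic triangles. -/
def ThinTriangles (Γ : SimpleGraph V) (δ : ℕ) : Prop :=
  ∀ (u v w : V) (p : Γ.Walk u v) (q : Γ.Walk v w) (r : Γ.Walk u w),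
    Γ.IsGeodesic p → Γ.IsGeodesic q → Γ.IsGeodesic r →
    ∀ x ∈ r.support, ∃ y, (y ∈ p.support ∨ y ∈ q.support) ∧ Γ.dist x y ≤ δ

/-- Any geodesic lies in a logarithmic neighbourhood of any chain with the same
endpoints. -/
lemma lemA (hpre : Γ.Preconnected) (hδ : ThinTriangles Γ δ) :
    ∀ (k n : ℕ) (x : ℕ → V), n ≤ 2^k → (∀ j < n, Γ.dist (x j) (x (j+1)) ≤ c) →
    ∀ (γ : Γ.Walk (x 0) (x n)), Γ.IsGeodesic γ → ∀ p ∈ γ.support,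
    ∃ j ≤ n, Γ.dist p (x j) ≤ δ * k + c := by
  intro k
  induction k with
  | zero =>
    intro n x hn hx γ hγ p hp
    refine ⟨0, Nat.zero_le _, ?_⟩
    have h1 := (dist_le_length_of_mem_support γ hp).1
    have h2 : γ.length ≤ c := by
      rw [hγ]
      interval_cases n
      · simp [dist_self]
      · exact hx 0 (by omega)
    rw [dist_comm]
    simpa using by omega
  | succ k ih =>
    intro n x hn hx γ hγ p hp
    set m := n / 2 with hm
    have hmn : m ≤ n := Nat.div_le_self _ _
    have h2k : 2 * 2^k = 2^(k+1) := by rw [pow_succ]; ring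
    have hm2 : m ≤ 2^k := by omega
    have hnm2 : n - m ≤ 2^k := by omega
    obtain ⟨γ1, hγ1⟩ := (hpre (x 0) (x m)).exists_walk_length_eq_dist
    obtain ⟨γ2, hγ2⟩ := (hpre (x m) (x n)).exists_walk_length_eq_dist
    obtain ⟨y, hy, hdy⟩ := hδ (x 0) (x m) (x n) γ1 γ2 γ hγ1 hγ2 hγ p hp
    have hmulsucc : δ * (k+1) + c = δ + (δ * k + c) := by ring
    rcases hy with hy | hy
    · obtain ⟨j, hj, hdj⟩ := ih m x hm2 (fun j hj => hx j (by omega)) γ1 hγ1 y hy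
      refine ⟨j, by omega, ?_⟩
      have htri := dist_triangle_of_reachable (hpre p y) (hpre y (x j))
      omega
    · set x' : ℕ → V := fun i => x (m + i) with hx'
      have he : x n = x' (n - m) := by rw [hx']; congr 1; omega
      set γ2' : Γ.Walk (x' 0) (x' (n - m)) := γ2.copy rfl he with hg2'
      have hγ2' : Γ.IsGeodesic γ2' := by
        show γ2'.length = _
        rw [hg2', Walk.length_copy, ← he]
        exact hγ2
      have hchain' : ∀ j < n - m, Γ.dist (x' j) (x' (j+1)) ≤ c := by
        intro j hj
        have h := hx (m + j) (by omega)
        have : m + (j + 1) = m + j + 1 := by omega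
        rw [hx']; simp only []
        rw [this]
        exact h
      obtain ⟨j, hj, hdj⟩ := ih (n - m) x' hnm2 hchain' γ2' hγ2' y
        (by rw [hg2', Walk.support_copy]; exact hy)
      refine ⟨m + j, by omega, ?_⟩
      have htri := dist_triangle_of_reachable (hpre p y) (hpre y (x' j))
      have : x' j = x (m + j) := rfl
      rw [this] at htri hdj
      omega

def morseD0 (δ c : ℕ) : ℕ := δ * (32*c*δ + 32*c*c) + 2*c

/-- Uniform version: a geodesic lies in a bounded neighbourhood of any quasigeodesic
chain with the same endpoints. -/
lemma lemC (hpre : Γ.Preconnected) (hδ : ThinTriangles Γ δ) (hc : 1 ≤ c) :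
    ∀ (n : ℕ) (x : ℕ → V), (∀ j < n, Γ.dist (x j) (x (j+1)) ≤ c) →
    (∀ j k, j ≤ k → k ≤ n → k - j ≤ Γ.dist (x j) (x k)) →
    ∀ (γ : Γ.Walk (x 0) (x n)), Γ.IsGeodesic γ → ∀ p ∈ γ.support,
    ∃ j ≤ n, Γ.dist p (x j) ≤ morseD0 δ c := by
  intro n x hx hlow γ hγ
  classical
  have hFmin : ∀ q : V, ∃ j, j ≤ n ∧ (∀ j' ≤ n, Γ.dist q (x j) ≤ Γ.dist q (x j')) := by
    intro q
    obtain ⟨j, hj, hmin⟩ := Finset.exists_min_image (Finset.range (n+1))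
      (fun j => Γ.dist q (x j)) ⟨0, by simp⟩
    exact ⟨j, by simpa [Nat.lt_succ_iff] using Finset.mem_range.1 hj,
      fun j' hj' => hmin j' (Finset.mem_range.2 (by omega))⟩
  choose Fj hFj1 hFj2 using hFmin
  set F : V → ℕ := fun q => Γ.dist q (x (Fj q)) with hF
  obtain ⟨pm, hpmmem, hmax⟩ := Finset.exists_max_image γ.support.toFinset F
    ⟨x 0, List.mem_toFinset.2 γ.start_mem_support⟩
  rw [List.mem_toFinset] at hpmmem
  set d := F pm with hd
  have key1 : ∀ j, j ≤ n → d ≤ Γ.dist pm (x j) := fun j hj => hFj2 pm j hj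
  have main : d ≤ morseD0 δ c := by
    rcases Nat.eq_zero_or_pos d with h0 | hdpos
    · rw [h0]; exact Nat.zero_le _
    obtain ⟨i, hgvi, hiL⟩ := Walk.mem_support_iff_exists_getVert.1 hpmmem
    set L := γ.length with hL
    set i1 := i - 2*d with hi1
    set i2 := min (i + 2*d) L with hi2
    set y := γ.getVert i1 with hy
    set z := γ.getVert i2 with hz
    have dpy : Γ.dist pm y = i - i1 := by
      rw [dist_comm, ← hgvi]; exact hγ.dist_getVert (by omega) (by omega)
    have dyz : Γ.dist y z = i2 - i1 := hγ.dist_getVert (by omega) (by omega)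
    have dpz : Γ.dist pm z = i2 - i := by
      rw [← hgvi]; exact hγ.dist_getVert (by omega) (by omega)
    set j1 := Fj y with hj1
    set j2 := Fj z with hj2
    have hj1n : j1 ≤ n := hFj1 y
    have hj2n : j2 ≤ n := hFj1 z
    set e1 := F y with he1
    set e2 := F z with he2
    have he1d : e1 ≤ d := hmax y (List.mem_toFinset.2 (γ.getVert_mem_support i1))
    have he2d : e2 ≤ d := hmax z (List.mem_toFinset.2 (γ.getVert_mem_support i2))
    have hy0 : d + e1 ≤ Γ.dist pm y := by
      rcases le_or_gt (2*d) i with h | h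
      · omega
      · have hyx0 : y = x 0 := by
          rw [hy, show i1 = 0 by omega, Walk.getVert_zero]
        have hz1 : e1 ≤ Γ.dist y (x 0) := hFj2 y 0 (Nat.zero_le n)
        rw [hyx0, dist_self] at hz1
        have := key1 0 (Nat.zero_le n)
        rw [← hyx0] at this
        omega
    have hz0 : d + e2 ≤ Γ.dist pm z := by
      rcases le_or_gt (i + 2*d) L with h | h
      · omega
      · have hzxn : z = x n := by
          rw [hz, show i2 = L by omega, hL, Walk.getVert_length]
        have hz1 : e2 ≤ Γ.dist z (x n) := hFj2 z n (le_refl n)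
        rw [hzxn, dist_self] at hz1
        have := key1 n (le_refl n)
        rw [← hzxn] at this
        omega
    obtain ⟨W1, hW1⟩ := (hpre y (x j1)).exists_walk_length_eq_dist
    obtain ⟨W2, hW2⟩ := (hpre (x j2) z).exists_walk_length_eq_dist
    have hW1e : W1.length = e1 := hW1
    have hW2e : W2.length = e2 := by rw [hW2, dist_comm]
    -- middle walk along the chain
    have hmid : ∃ M : Γ.Walk (x j1) (x j2),
        M.length ≤ c * (max j1 j2 - min j1 j2) ∧
        ∀ q ∈ M.support, ∃ s, s ≤ n ∧ Γ.dist q (x s) ≤ c := by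
      rcases le_total j1 j2 with h | h
      · obtain ⟨M, h1, h2⟩ := exists_chain_walk hpre (j2 - j1) j1
          (fun t ht => hx (j1 + t) (by omega))
        refine ⟨M.copy rfl (by congr 1; omega), ?_, ?_⟩
        · rw [Walk.length_copy, max_eq_right h, min_eq_left h]; exact h1
        · intro q hq
          rw [Walk.support_copy] at hq
          obtain ⟨s, hs1, hs2, hs3⟩ := h2 q hq
          exact ⟨s, by omega, hs3⟩
      · obtain ⟨M, h1, h2⟩ := exists_chain_walk hpre (j1 - j2) j2
          (fun t ht => hx (j2 + t) (by omega))
        refine ⟨((M.copy rfl (by congr 1; omega)).reverse), ?_, ?_⟩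
        · rw [Walk.length_reverse, Walk.length_copy, max_eq_left h, min_eq_right h]; exact h1
        · intro q hq
          rw [Walk.support_reverse, List.mem_reverse, Walk.support_copy] at hq
          obtain ⟨s, hs1, hs2, hs3⟩ := h2 q hq
          exact ⟨s, by omega, hs3⟩
    obtain ⟨M, hMl, hMs⟩ := hmid
    have hmm : max j1 j2 - min j1 j2 ≤ 6 * d := by
      have hlow' : max j1 j2 - min j1 j2 ≤ Γ.dist (x (min j1 j2)) (x (max j1 j2)) :=
        hlow (min j1 j2) (max j1 j2) (by omega) (by omega)
      have hsym : Γ.dist (x (min j1 j2)) (x (max j1 j2)) = Γ.dist (x j1) (x j2) := by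
        rcases le_total j1 j2 with h | h
        · rw [min_eq_left h, max_eq_right h]
        · rw [min_eq_right h, max_eq_left h, dist_comm]
      have t1 : Γ.dist (x j1) (x j2) ≤ Γ.dist (x j1) y + Γ.dist y (x j2) :=
        dist_triangle_of_reachable (hpre _ _) (hpre _ _)
      have t2 : Γ.dist y (x j2) ≤ Γ.dist y z + Γ.dist z (x j2) :=
        dist_triangle_of_reachable (hpre _ _) (hpre _ _)
      have c1 : Γ.dist (x j1) y = e1 := by rw [dist_comm]
      have c2 : Γ.dist z (x j2) = e2 := rfl
      omega
    set W : Γ.Walk y z := W1.append (M.append W2) with hW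
    have hWlen : W.length ≤ 8 * c * d := by
      rw [hW, Walk.length_append, Walk.length_append]
      have : c * (max j1 j2 - min j1 j2) ≤ c * (6*d) := Nat.mul_le_mul_left c hmm
      nlinarith [hc, hdpos, he1d, he2d, hMl, hW1e, hW2e]
    have hWfar : ∀ q ∈ W.support, d ≤ Γ.dist pm q + c := by
      intro q hq
      rw [hW, Walk.mem_support_append_iff] at hq
      rcases hq with hq | hq
      · have h1 := (dist_le_length_of_mem_support W1 hq).1
        have htri : Γ.dist pm y ≤ Γ.dist pm q + Γ.dist q y :=
          dist_triangle_of_reachable (hpre _ _) (hpre _ _)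
        have : Γ.dist q y = Γ.dist y q := dist_comm (G := Γ)
        omega
      · rw [Walk.mem_support_append_iff] at hq
        rcases hq with hq | hq
        · obtain ⟨s, hs1, hs2⟩ := hMs q hq
          have := key1 s hs1
          have htri : Γ.dist pm (x s) ≤ Γ.dist pm q + Γ.dist q (x s) :=
            dist_triangle_of_reachable (hpre _ _) (hpre _ _)
          omega
        · have h1 := (dist_le_length_of_mem_support W2 hq).2
          have htri : Γ.dist pm z ≤ Γ.dist pm q + Γ.dist q z :=
            dist_triangle_of_reachable (hpre _ _) (hpre _ _)
          omega
    obtain ⟨γ', hγ'g, _, hγ'mem⟩ := hγ.exists_subgeodesic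
      (show i1 ≤ i2 by omega) (show i2 ≤ γ.length by omega)
    have hpm' : pm ∈ γ'.support := by
      rw [← hgvi]; exact hγ'mem i (by omega) (by omega)
    set N := W.length with hN
    set K := Nat.clog 2 (8 * c * d) with hK
    have h8cd2 : 2 ≤ 8 * c * d := by
      have : 8*1*1 ≤ 8*c*d := Nat.mul_le_mul (Nat.mul_le_mul_left 8 hc) hdpos
      omega
    have hN2K : N ≤ 2^K := le_trans hWlen (Nat.le_pow_clog (by norm_num) _)
    have hWchain : ∀ j, j < N → Γ.dist (W.getVert j) (W.getVert (j+1)) ≤ c :=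
      fun j hj => le_trans (adj_dist_le_one (W.adj_getVert_succ hj)) hc
    have hc0 : y = W.getVert 0 := (W.getVert_zero).symm
    have hcN : z = W.getVert N := (W.getVert_length).symm
    obtain ⟨t, htN, htd⟩ := lemA δ c hpre hδ K N W.getVert hN2K hWchain
      (γ'.copy hc0 hcN)
      (by show _ = _; rw [Walk.length_copy, ← hc0, ← hcN]; exact hγ'g)
      pm (by rw [Walk.support_copy]; exact hpm')
    have hfar := hWfar (W.getVert t) (W.getVert_mem_support t)
    have hd2 : d ≤ δ * K + 2*c := by omega
    have hKpos : 1 ≤ K := by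
      have hle : 8*c*d ≤ 2^K := Nat.le_pow_clog (by norm_num) _
      by_contra hcon
      rw [show K = 0 by omega] at hle
      simp at hle
      omega
    have hpow : 2^(K-1) < 8*c*d := Nat.pow_pred_clog_lt_self (by norm_num) (by omega)
    have h2K : 2^K = 2^(K-1) * 2 := by
      rw [← pow_succ]; congr 1; omega
    have hKb : 2^K < (16*c*δ) * K + 32*c*c := by
      have hstep : 8*c*d ≤ 8*c*(δ*K + 2*c) := Nat.mul_le_mul_left _ hd2
      calc 2^K = 2^(K-1) * 2 := h2K
      _ < (8*c*d) * 2 := by omega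
      _ ≤ (8*c*(δ*K + 2*c)) * 2 := Nat.mul_le_mul_right 2 hstep
      _ = (16*c*δ)*K + 32*c*c := by ring
    have hKle : K ≤ 32*c*δ + 32*c*c := by
      by_contra hcon
      push_neg at hcon
      have ha : 2*(16*c*δ) ≤ K := by
        have : 2*(16*c*δ) = 32*c*δ := by ring
        omega
      have hb : 32*c*c ≤ K := by omega
      have := lin_le_two_pow (a := 16*c*δ) (b := 32*c*c) (k := K) ha hb
      omega
    have : δ * K ≤ δ * (32*c*δ + 32*c*c) := Nat.mul_le_mul_left δ hKle
    show d ≤ δ * (32*c*δ + 32*c*c) + 2*c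
    omega
  intro p hp
  refine ⟨Fj p, hFj1 p, ?_⟩
  have h1 : F p ≤ d := hmax p (List.mem_toFinset.2 hp)
  exact le_trans h1 main

def morseD1 (δ c : ℕ) : ℕ := c * (morseD0 δ c + 1) + morseD0 δ c

/-- Every point of a quasigeodesic chain lies in a bounded neighbourhood of any geodesic
with the same endpoints. -/
lemma lemAa (hpre : Γ.Preconnected) (hδ : ThinTriangles Γ δ) (hc : 1 ≤ c) :
    ∀ (n : ℕ) (x : ℕ → V), (∀ j < n, Γ.dist (x j) (x (j+1)) ≤ c) →
    (∀ j k, j ≤ k → k ≤ n → k - j ≤ Γ.dist (x j) (x k)) →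
    ∀ (γ : Γ.Walk (x 0) (x n)), Γ.IsGeodesic γ → ∀ t ≤ n,
    ∃ p ∈ γ.support, Γ.dist (x t) p ≤ morseD1 δ c := by
  intro n x hx hlow γ hγ t ht
  classical
  set D0 := morseD0 δ c with hD0
  set w' := D0 + 1 with hw'
  rcases Nat.eq_zero_or_pos n with hn0 | hn1
  · subst hn0
    have ht0 : t = 0 := by omega
    subst ht0
    exact ⟨x 0, γ.start_mem_support, by rw [dist_self]; exact Nat.zero_le _⟩
  by_cases hA : ∃ s, s ≤ n ∧ (t ≤ s + w' ∧ s ≤ t + w') ∧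
      ∃ p ∈ γ.support, Γ.dist (x s) p ≤ D0
  · obtain ⟨s, hsn, ⟨hs1, hs2⟩, p, hp, hdp⟩ := hA
    refine ⟨p, hp, ?_⟩
    have hts : Γ.dist (x t) (x s) ≤ c * w' := by
      rcases le_total t s with h | h
      · have h1 := chain_dist_le hpre hx (s - t) t (by omega)
        rw [show t + (s - t) = s by omega] at h1
        have hmul : c * (s - t) ≤ c * w' := Nat.mul_le_mul_left c (by omega)
        omega
      · have h1 := chain_dist_le hpre hx (t - s) s (by omega)
        rw [show s + (t - s) = t by omega] at h1
        have hcomm : Γ.dist (x t) (x s) = Γ.dist (x s) (x t) := dist_comm (G := Γ)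
        have hmul : c * (t - s) ≤ c * w' := Nat.mul_le_mul_left c (by omega)
        omega
    have htri : Γ.dist (x t) p ≤ Γ.dist (x t) (x s) + Γ.dist (x s) p :=
      dist_triangle_of_reachable (hpre _ _) (hpre _ _)
    have hm1 : morseD1 δ c = c * w' + D0 := rfl
    rw [hm1]
    omega
  · push_neg at hA
    exfalso
    set L := γ.length with hL
    have hnL : n ≤ L := by
      have := hlow 0 n (Nat.zero_le n) (le_refl n)
      have hγ' : L = Γ.dist (x 0) (x n) := hγ
      omega
    have hwit : ∀ i, ∃ s, s ≤ n ∧ Γ.dist (γ.getVert i) (x s) ≤ D0 := by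
      intro i
      obtain ⟨j, hj, hdj⟩ := lemC δ c hpre hδ hc n x hx hlow γ hγ (γ.getVert i)
        (γ.getVert_mem_support i)
      exact ⟨j, hj, hdj⟩
    choose f hf1 hf2 using hwit
    set g : ℕ → ℕ := fun i => if L ≤ i then n else if i = 0 then 0 else f i with hg
    have hgn : ∀ i, g i ≤ n := by
      intro i; rw [hg]; dsimp only; split_ifs with h1 h2
      · exact le_refl n
      · exact Nat.zero_le n
      · exact hf1 i
    have hgd : ∀ i, Γ.dist (γ.getVert i) (x (g i)) ≤ D0 := by
      intro i; rw [hg]; dsimp only; split_ifs with h1 h2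
      · rw [γ.getVert_of_length_le h1, dist_self]; exact Nat.zero_le _
      · subst h2; rw [Walk.getVert_zero, dist_self]; exact Nat.zero_le _
      · exact hf2 i
    have hlh : ∀ i, g i + w' < t ∨ t + w' < g i := by
      intro i
      by_contra hcon
      push_neg at hcon
      have h2 := hA (g i) (hgn i) ⟨by omega, by omega⟩ (γ.getVert i)
        (γ.getVert_mem_support i)
      have h3 := hgd i
      rw [dist_comm] at h3
      omega
    have hg0 : g 0 = 0 := by rw [hg]; simp; omega
    have hgL : g L = n := by rw [hg]; simp
    have hlow0 : g 0 + w' < t := by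
      rcases hlh 0 with h | h
      · exact h
      · rw [hg0] at h; omega
    have hhighL : t + w' < g L := by
      rcases hlh L with h | h
      · rw [hgL] at h
        have := hlow t n ht (le_refl n)
        have hgd' := hgd L
        omega
      · exact h
    have hex : ∃ i, t + w' < g i := ⟨L, hhighL⟩
    set i0 := Nat.find hex with hi0def
    have hi0 : t + w' < g i0 := Nat.find_spec hex
    have hi0L : i0 ≤ L := Nat.find_min' hex hhighL
    have hi0pos : 0 < i0 := by
      rcases Nat.eq_zero_or_pos i0 with h | h
      · rw [h, hg0] at hi0; omega
      · exact h
    have hprev : ¬ (t + w' < g (i0 - 1)) := Nat.find_min hex (by omega)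
    have hplow : g (i0 - 1) + w' < t := by
      rcases hlh (i0 - 1) with h | h
      · exact h
      · exact absurd h hprev
    set i := i0 - 1 with hi
    have hiL : i < L := by omega
    have hii : i + 1 = i0 := by omega
    have hhi : t + w' < g (i + 1) := by rw [hii]; exact hi0
    have hd12 : Γ.dist (x (g i)) (x (g (i + 1))) ≤ D0 + 1 + D0 := by
      have h1 := hgd i
      have h2 := hgd (i + 1)
      have hadj : Γ.dist (γ.getVert i) (γ.getVert (i + 1)) ≤ 1 :=
        adj_dist_le_one (γ.adj_getVert_succ hiL)
      have t1 : Γ.dist (x (g i)) (x (g (i + 1))) ≤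
          Γ.dist (x (g i)) (γ.getVert i) + Γ.dist (γ.getVert i) (x (g (i + 1))) :=
        dist_triangle_of_reachable (hpre _ _) (hpre _ _)
      have t2 : Γ.dist (γ.getVert i) (x (g (i + 1))) ≤
          Γ.dist (γ.getVert i) (γ.getVert (i + 1)) +
            Γ.dist (γ.getVert (i + 1)) (x (g (i + 1))) :=
        dist_triangle_of_reachable (hpre _ _) (hpre _ _)
      have c1 : Γ.dist (x (g i)) (γ.getVert i) = Γ.dist (γ.getVert i) (x (g i)) :=
        dist_comm (G := Γ)
      omega
    have hlow12 : g (i + 1) - g i ≤ Γ.dist (x (g i)) (x (g (i + 1))) :=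
      hlow (g i) (g (i + 1)) (by omega) (hgn (i + 1))
    omega

end Morse
end SimpleGraph


section Cayley

open SimpleGraph

variable {G : Type*} [Group G]

lemma exists_walk_map {V W : Type*} {G : SimpleGraph V} {H : SimpleGraph W} (f : V → W)
    (hf : ∀ a b, G.Adj a b → H.Adj (f a) (f b) ∨ f a = f b) :
    ∀ {u v : V} (p : G.Walk u v), ∃ q : H.Walk (f u) (f v), q.length ≤ p.length := by
  intro u v p
  induction p with
  | nil => exact ⟨.nil, by simp⟩
  | cons h p ih =>
    obtain ⟨q, hq⟩ := ih
    rcases hf _ _ h with ha | he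
    · exact ⟨.cons ha q, by simpa using Nat.succ_le_succ hq⟩
    · exact ⟨q.copy he.symm rfl, by rw [SimpleGraph.Walk.length_copy]; simp; omega⟩

lemma reachable_map {V W : Type*} {G : SimpleGraph V} {H : SimpleGraph W} (f : V → W)
    (hf : ∀ a b, G.Adj a b → H.Adj (f a) (f b) ∨ f a = f b) {u v : V}
    (hr : G.Reachable u v) : H.Reachable (f u) (f v) := by
  obtain ⟨p⟩ := hr
  obtain ⟨q, -⟩ := exists_walk_map f hf p
  exact ⟨q⟩

lemma dist_map_le {V W : Type*} {G : SimpleGraph V} {H : SimpleGraph W} (f : V → W)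
    (hf : ∀ a b, G.Adj a b → H.Adj (f a) (f b) ∨ f a = f b) {u v : V}
    (hr : G.Reachable u v) : H.dist (f u) (f v) ≤ G.dist u v := by
  obtain ⟨p, hp⟩ := hr.exists_walk_length_eq_dist
  obtain ⟨q, hq⟩ := exists_walk_map f hf p
  have := H.dist_le q
  omega

lemma cayley_adj_mul_left {S : Set G} (g : G) {a b : G} (h : (cayleyGraph G S).Adj a b) :
    (cayleyGraph G S).Adj (g * a) (g * b) := by
  obtain ⟨hne, hmem⟩ := h
  refine ⟨fun h => hne (mul_left_cancel h), ?_⟩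
  have e1 : (g*a)⁻¹ * (g*b) = a⁻¹ * b := by group
  have e2 : (g*b)⁻¹ * (g*a) = b⁻¹ * a := by group
  rw [e1, e2]; exact hmem

lemma cayley_preconnected {S : Set G} (hS : Subgroup.closure S = ⊤) :
    (cayleyGraph G S).Preconnected := by
  have key : ∀ g : G, (cayleyGraph G S).Reachable 1 g := by
    intro g
    have hg : g ∈ Subgroup.closure S := by rw [hS]; trivial
    induction hg using Subgroup.closure_induction with
    | mem s hs =>
      by_cases h1 : s = 1
      · subst h1; exact Reachable.refl _
      · exact SimpleGraph.Adj.reachable ⟨fun h => h1 h.symm, Or.inl (by simpa using hs)⟩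
    | one => exact Reachable.refl _
    | mul a b ha hb iha ihb =>
      refine iha.trans ?_
      have := reachable_map (f := fun x => a * x)
        (fun u v h => Or.inl (cayley_adj_mul_left a h)) ihb
      simpa using this
    | inv a ha iha =>
      have := reachable_map (f := fun x => a⁻¹ * x)
        (fun u v h => Or.inl (cayley_adj_mul_left a⁻¹ h)) iha
      simp only [mul_one, inv_mul_cancel] at this
      exact this.symm
  intro u v
  have := reachable_map (f := fun x => u * x)
    (fun a b h => Or.inl (cayley_adj_mul_left u h)) (key (u⁻¹ * v))
  simpa using this

lemma cayley_dist_mul_left {S : Set G} (hpre : (cayleyGraph G S).Preconnected) (g a b : G) :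
    (cayleyGraph G S).dist (g * a) (g * b) = (cayleyGraph G S).dist a b := by
  apply le_antisymm
  · exact dist_map_le _ (fun u v h => Or.inl (cayley_adj_mul_left g h)) (hpre a b)
  · have := dist_map_le (f := fun x : G => g⁻¹ * x)
      (fun u v h => Or.inl (cayley_adj_mul_left g⁻¹ h)) (hpre (g*a) (g*b))
    simpa using this

end Cayley

open SimpleGraph

/-- **Lemma (Osin, Lemma 3.3).** Let `G` be a group and `R` a retract of `G`. If `G` is
weakly hyperbolic relative to a collection of subgroups `A 0, …, A (m-1)` with `A i ≤ R`
for all `i`, then `R` is weakly hyperbolic relative to this collection. -/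
theorem retract_weakly_relatively_hyperbolic {G : Type*} [Group G] (R : Subgroup G)
    (ρ : G →* R) (hρ : ∀ r : G, r ∈ R → (ρ r : G) = r)
    {m : ℕ} (A : Fin m → Subgroup G) (hA : ∀ i, A i ≤ R)
    (hG : IsWeaklyRelativelyHyperbolic G A) :
    IsWeaklyRelativelyHyperbolic R (fun i => (A i).subgroupOf R) := by
  classical
  obtain ⟨X, hXfin, hXgen, δ, hδ⟩ := hG
  set S : Set G := X ∪ ⋃ i, (A i : Set G) with hS
  set Γ : SimpleGraph G := cayleyGraph G S with hΓ
  have hδ' : Γ.ThinTriangles δ := hδ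
  have hXgen' : Subgroup.closure S = ⊤ := hXgen
  have hpre : Γ.Preconnected := cayley_preconnected hXgen'
  set XR : Set ↥R := (fun g => ρ g) '' X with hXR
  set TR : Set ↥R := XR ∪ ⋃ i, ((A i).subgroupOf R : Set ↥R) with hTR
  set ΓR : SimpleGraph ↥R := cayleyGraph ↥R TR with hΓR
  -- `ρ` maps adjacent vertices to adjacent or equal vertices
  have hmap : ∀ a b : G, Γ.Adj a b → ΓR.Adj (ρ a) (ρ b) ∨ ρ a = ρ b := by
    intro a b hab
    by_cases he : ρ a = ρ b
    · exact Or.inr he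
    · obtain ⟨hne, hmem⟩ := hab
      refine Or.inl ⟨he, ?_⟩
      have key : ∀ u v : G, u⁻¹ * v ∈ S → (ρ u)⁻¹ * (ρ v) ∈ TR := by
        intro u v huv
        have hv : (ρ u)⁻¹ * ρ v = ρ (u⁻¹ * v) := by rw [map_mul, map_inv]
        rw [hv]
        rcases huv with hx | hi
        · exact Or.inl ⟨u⁻¹ * v, hx, rfl⟩
        · simp only [Set.mem_iUnion] at hi
          obtain ⟨i, hi⟩ := hi
          refine Or.inr (Set.mem_iUnion.2 ⟨i, ?_⟩)
          show ρ (u⁻¹ * v) ∈ (A i).subgroupOf R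
          rw [Subgroup.mem_subgroupOf]
          show ((ρ (u⁻¹ * v) : ↥R) : G) ∈ A i
          rw [hρ _ (hA i hi)]
          exact hi
      rcases hmem with h | h
      · exact Or.inl (key a b h)
      · exact Or.inr (key b a h)
  -- `R` is relatively generated by `XR`
  have hgenR : Subgroup.closure TR = ⊤ := by
    rw [eq_top_iff]
    intro r _
    have h1 : (r : G) ∈ Subgroup.closure S := by rw [hXgen']; trivial
    have h2 : r = ρ (r : G) := Subtype.ext (hρ (r : G) r.2).symm
    rw [h2]
    have h3 : ρ (r : G) ∈ (Subgroup.closure S).map ρ := Subgroup.mem_map_of_mem ρ h1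
    rw [MonoidHom.map_closure] at h3
    refine Subgroup.closure_mono ?_ h3
    rintro _ ⟨s, hs, rfl⟩
    rcases hs with hx | hi
    · exact Or.inl ⟨s, hx, rfl⟩
    · simp only [Set.mem_iUnion] at hi
      obtain ⟨i, hi⟩ := hi
      refine Or.inr (Set.mem_iUnion.2 ⟨i, ?_⟩)
      show ρ s ∈ (A i).subgroupOf R
      rw [Subgroup.mem_subgroupOf]
      show ((ρ s : ↥R) : G) ∈ A i
      rw [hρ s (hA i hi)]
      exact hi
  -- the distance in `Γ` of the endpoints of an edge of `ΓR` is bounded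
  set c : ℕ := (hXfin.toFinset.sup fun x => Γ.dist 1 ((ρ x : ↥R) : G)) + 1 with hcdef
  have hc : 1 ≤ c := by omega
  have hlift1 : ∀ r s : ↥R, (r⁻¹ * s ∈ TR) → Γ.dist ↑r ↑s ≤ c := by
    intro r s hmem
    rcases hmem with ⟨x, hx, hpx⟩ | hi
    · replace hpx : ρ x = r⁻¹ * s := hpx
      have e : (s : G) = ↑r * ↑(ρ x) := by
        rw [hpx]
        push_cast
        rw [mul_inv_cancel_left]
      calc Γ.dist ↑r ↑s = Γ.dist (↑r * 1) (↑r * ↑(ρ x)) := by rw [mul_one, ← e]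
      _ = Γ.dist 1 ↑(ρ x) := cayley_dist_mul_left hpre _ _ _
      _ ≤ hXfin.toFinset.sup (fun x => Γ.dist 1 ((ρ x : ↥R) : G)) :=
          Finset.le_sup (f := fun x => Γ.dist 1 ((ρ x : ↥R) : G)) (hXfin.mem_toFinset.2 hx)
      _ ≤ c := by omega
    · simp only [Set.mem_iUnion] at hi
      obtain ⟨i, hi⟩ := hi
      have hi' : ((r⁻¹ * s : ↥R) : G) ∈ A i := hi
      by_cases he : (r : G) = (s : G)
      · rw [he, SimpleGraph.dist_self]; omega
      · have hmem' : (↑r)⁻¹ * (↑s : G) ∈ S := by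
          refine Or.inr (Set.mem_iUnion.2 ⟨i, ?_⟩)
          have : ((r⁻¹ * s : ↥R) : G) = (↑r)⁻¹ * ↑s := by push_cast; rfl
          rw [← this]
          exact hi'
        have hadj : Γ.Adj ↑r ↑s := ⟨he, Or.inl hmem'⟩
        exact le_trans (adj_dist_le_one hadj) (by omega)
  have hlift : ∀ r s : ↥R, ΓR.Adj r s → Γ.dist ↑r ↑s ≤ c := by
    intro r s h
    obtain ⟨hne, hmem⟩ := h
    rcases hmem with h | h
    · exact hlift1 r s h
    · have := hlift1 s r h
      rwa [SimpleGraph.dist_comm] at this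
  have hpreR : ΓR.Preconnected := cayley_preconnected hgenR
  -- distance comparison via ρ
  have hcomp : ∀ r s : ↥R, ΓR.dist r s ≤ Γ.dist ↑r ↑s := by
    intro r s
    have h := dist_map_le (f := fun g : G => ρ g) hmap (hpre ↑r ↑s)
    have e1 : ρ (r : G) = r := Subtype.ext (hρ _ r.2)
    have e2 : ρ (s : G) = s := Subtype.ext (hρ _ s.2)
    rwa [e1, e2] at h
  -- chains from ΓR-geodesics
  have hchainU : ∀ {a b : ↥R} (W : ΓR.Walk a b), ∀ j, j < W.length →
      Γ.dist ↑(W.getVert j) ↑(W.getVert (j+1)) ≤ c :=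
    fun W j hj => hlift _ _ (W.adj_getVert_succ hj)
  have hchainL : ∀ {a b : ↥R} (W : ΓR.Walk a b), ΓR.IsGeodesic W →
      ∀ j k, j ≤ k → k ≤ W.length →
      k - j ≤ Γ.dist ↑(W.getVert j) ↑(W.getVert k) := by
    intro a b W hW j k hjk hk
    have h1 : ΓR.dist (W.getVert j) (W.getVert k) = k - j := hW.dist_getVert hjk hk
    have h2 := hcomp (W.getVert j) (W.getVert k)
    omega
  -- conclusion
  have hmain : ΓR.IsHyperbolic := by
    refine ⟨morseD1 δ c + δ + morseD0 δ c, ?_⟩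
    intro u v w p q r hp hq hr xx hxx
    obtain ⟨P, hP⟩ := (hpre ↑u ↑v).exists_walk_length_eq_dist
    obtain ⟨Q, hQ⟩ := (hpre ↑v ↑w).exists_walk_length_eq_dist
    obtain ⟨RG, hRG⟩ := (hpre ↑u ↑w).exists_walk_length_eq_dist
    obtain ⟨t, hgvt, htn⟩ := Walk.mem_support_iff_exists_getVert.1 hxx
    set xr : ℕ → G := fun j => ↑(r.getVert j) with hxr
    have hx0 : xr 0 = ↑u := by rw [hxr]; simp only [Walk.getVert_zero]
    have hxn : xr r.length = ↑w := by rw [hxr]; simp only [Walk.getVert_length]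
    obtain ⟨p1, hp1mem, hp1d⟩ := lemAa δ c hpre hδ' hc r.length xr
      (fun j hj => hchainU r j hj) (hchainL r hr)
      (RG.copy hx0.symm hxn.symm)
      (by show _ = _; rw [Walk.length_copy, hx0, hxn]; exact hRG) t htn
    rw [Walk.support_copy] at hp1mem
    obtain ⟨y1, hy1mem, hy1d⟩ := hδ' ↑u ↑v ↑w P Q RG hP hQ hRG p1 hp1mem
    have hxt : xr t = ↑xx := by
      show ((r.getVert t : ↥R) : G) = ↑xx
      rw [hgvt]
    rw [hxt] at hp1d
    rcases hy1mem with hy | hy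
    · set xp : ℕ → G := fun j => ↑(p.getVert j) with hxp
      have hp0 : xp 0 = ↑u := by rw [hxp]; simp only [Walk.getVert_zero]
      have hpn : xp p.length = ↑v := by rw [hxp]; simp only [Walk.getVert_length]
      obtain ⟨j, hj, hjd⟩ := lemC δ c hpre hδ' hc p.length xp
        (fun j hj => hchainU p j hj) (hchainL p hp)
        (P.copy hp0.symm hpn.symm)
        (by show _ = _; rw [Walk.length_copy, hp0, hpn]; exact hP) y1
        (by rw [Walk.support_copy]; exact hy)
      refine ⟨p.getVert j, Or.inl (p.getVert_mem_support j), ?_⟩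
      have hjd' : Γ.dist y1 ↑(p.getVert j) ≤ morseD0 δ c := hjd
      have t1 : Γ.dist ↑xx ↑(p.getVert j) ≤
          Γ.dist ↑xx p1 + Γ.dist p1 ↑(p.getVert j) :=
        dist_triangle_of_reachable (hpre _ _) (hpre _ _)
      have t2 : Γ.dist p1 ↑(p.getVert j) ≤
          Γ.dist p1 y1 + Γ.dist y1 ↑(p.getVert j) :=
        dist_triangle_of_reachable (hpre _ _) (hpre _ _)
      have hfin := hcomp xx (p.getVert j)
      omega
    · set xq : ℕ → G := fun j => ↑(q.getVert j) with hxq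
      have hq0 : xq 0 = ↑v := by rw [hxq]; simp only [Walk.getVert_zero]
      have hqn : xq q.length = ↑w := by rw [hxq]; simp only [Walk.getVert_length]
      obtain ⟨j, hj, hjd⟩ := lemC δ c hpre hδ' hc q.length xq
        (fun j hj => hchainU q j hj) (hchainL q hq)
        (Q.copy hq0.symm hqn.symm)
        (by show _ = _; rw [Walk.length_copy, hq0, hqn]; exact hQ) y1
        (by rw [Walk.support_copy]; exact hy)
      refine ⟨q.getVert j, Or.inr (q.getVert_mem_support j), ?_⟩
      have hjd' : Γ.dist y1 ↑(q.getVert j) ≤ morseD0 δ c := hjd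
      have t1 : Γ.dist ↑xx ↑(q.getVert j) ≤
          Γ.dist ↑xx p1 + Γ.dist p1 ↑(q.getVert j) :=
        dist_triangle_of_reachable (hpre _ _) (hpre _ _)
      have t2 : Γ.dist p1 ↑(q.getVert j) ≤
          Γ.dist p1 y1 + Γ.dist y1 ↑(q.getVert j) :=
        dist_triangle_of_reachable (hpre _ _) (hpre _ _)
      have hfin := hcomp xx (q.getVert j)
      omega
  exact ⟨XR, hXfin.image _, hgenR, hmain⟩
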